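/- Let Γ be a closed subset of R^n with finitely many connected components, each bounded. Fix H, a diffeomorphism class. For 0 < r < R, let N(Γ,H;R) be the number of connected components of Γ contained in the closed ball B(0,R) and of class H, let N(Γ,H;r,u) be the number of components of Γ contained in B(u,r) of class H, and let N*(Γ,H;r,u) be the number of components of class H intersecting the closed ball of radius r around u. Then (1/Vol B(r)) ∫_{B(0,R−r)} N(Γ,H;r,u) du ≤ N(Γ,H;R) ≤ (1/Vol B(r)) ∫_{B(0,R+r)} N*(Γ,H;r,u) du. -/

import Mathlib

open Metric MeasureTheory

/-- `γ` is a connected component of `Γ`. -/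
def IsCompOf {E : Type*} [TopologicalSpace E] (Γ γ : Set E) : Prop :=
  ∃ x ∈ Γ, γ = connectedComponentIn Γ x

/-- Number of components of `Γ` of class `H` contained in the closed ball `B(0,R)`. -/
noncomputable def NClosed (n : ℕ) (Γ : Set (EuclideanSpace ℝ (Fin n)))
    (H : Set (Set (EuclideanSpace ℝ (Fin n)))) (R : ℝ) : ℕ :=
  Nat.card {γ : Set (EuclideanSpace ℝ (Fin n)) //
    IsCompOf Γ γ ∧ γ ∈ H ∧ γ ⊆ closedBall (0 : EuclideanSpace ℝ (Fin n)) R}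

/-- Number of components of `Γ` of class `H` contained in the open ball `B(u,r)`. -/
noncomputable def NIn (n : ℕ) (Γ : Set (EuclideanSpace ℝ (Fin n)))
    (H : Set (Set (EuclideanSpace ℝ (Fin n)))) (r : ℝ) (u : EuclideanSpace ℝ (Fin n)) : ℕ :=
  Nat.card {γ : Set (EuclideanSpace ℝ (Fin n)) // IsCompOf Γ γ ∧ γ ∈ H ∧ γ ⊆ ball u r}

/-- Number of components of `Γ` of class `H` intersecting the closed ball of radius `r` about `u`. -/
noncomputable def NStar (n : ℕ) (Γ : Set (EuclideanSpace ℝ (Fin n)))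
    (H : Set (Set (EuclideanSpace ℝ (Fin n)))) (r : ℝ) (u : EuclideanSpace ℝ (Fin n)) : ℕ :=
  Nat.card {γ : Set (EuclideanSpace ℝ (Fin n)) //
    IsCompOf Γ γ ∧ γ ∈ H ∧ (γ ∩ closedBall u r).Nonempty}

section Aux

variable {n : ℕ}

lemma isCompOf_nonempty {Γ γ : Set (EuclideanSpace ℝ (Fin n))} (h : IsCompOf Γ γ) :
    γ.Nonempty := by
  obtain ⟨x, hx, rfl⟩ := h
  exact ⟨x, mem_connectedComponentIn hx⟩

lemma isCompOf_isClosed {Γ γ : Set (EuclideanSpace ℝ (Fin n))} (hΓ : IsClosed Γ)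
    (h : IsCompOf Γ γ) : IsClosed γ := by
  obtain ⟨x, hx, rfl⟩ := h
  have hsub : connectedComponentIn Γ x ⊆ Γ := connectedComponentIn_subset _ _
  have h1 : IsPreconnected (closure (connectedComponentIn Γ x)) :=
    (isPreconnected_connectedComponentIn).closure
  have h2 : closure (connectedComponentIn Γ x) ⊆ connectedComponentIn Γ x :=
    h1.subset_connectedComponentIn (subset_closure (mem_connectedComponentIn hx))
      (closure_minimal hsub hΓ)
  exact isClosed_of_closure_subset h2

/-- The set of centers `u` such that compact `γ` is inside `ball u r` is open. -/
lemma isOpen_subset_ball {γ : Set (EuclideanSpace ℝ (Fin n))} (hc : IsCompact γ) (r : ℝ) :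
    IsOpen {u : EuclideanSpace ℝ (Fin n) | γ ⊆ ball u r} := by
  rcases γ.eq_empty_or_nonempty with hγ | hγ
  · simp [hγ]
  rw [Metric.isOpen_iff]
  intro u0 hu0
  obtain ⟨x0, hx0, hmax⟩ := hc.exists_isMaxOn hγ
    (continuous_dist.comp (Continuous.prodMk continuous_id continuous_const)).continuousOn
  have hmax' : ∀ y ∈ γ, dist y u0 ≤ dist x0 u0 := fun y hy => hmax hy
  have hm : dist x0 u0 < r := hu0 hx0
  refine ⟨r - dist x0 u0, by linarith, fun u hu x hx => ?_⟩
  have h1 : dist x u0 ≤ dist x0 u0 := hmax' x hx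
  have h2 : dist u u0 < r - dist x0 u0 := hu
  have := dist_triangle x u0 u
  simp only [mem_ball]
  have := dist_triangle x u0 u
  calc dist x u ≤ dist x u0 + dist u0 u := dist_triangle x u0 u
    _ < r := by rw [dist_comm u0 u]; linarith

/-- The set of centers `u` such that `γ` meets `closedBall u r` is closed, for compact `γ`. -/
lemma isClosed_star {γ : Set (EuclideanSpace ℝ (Fin n))} (hc : IsCompact γ) (r : ℝ) :
    IsClosed {u : EuclideanSpace ℝ (Fin n) | (γ ∩ closedBall u r).Nonempty} := by
  rcases γ.eq_empty_or_nonempty with hγ | hγ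
  · simp [hγ]
  have heq : {u : EuclideanSpace ℝ (Fin n) | (γ ∩ closedBall u r).Nonempty}
      = {u | infDist u γ ≤ r} := by
    ext u
    constructor
    · rintro ⟨x, hxγ, hxu⟩
      have : dist u x ≤ r := by rwa [mem_closedBall, dist_comm] at hxu
      exact le_trans (infDist_le_dist_of_mem hxγ) this
    · intro hu
      obtain ⟨x, hxγ, hx⟩ := hc.exists_infDist_eq_dist hγ u
      exact ⟨x, hxγ, by rw [mem_closedBall, dist_comm]; rw [← hx]; exact hu⟩
  rw [heq]
  exact isClosed_le (continuous_infDist_pt γ) continuous_const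

lemma card_filter {α : Type*} {s : Set α} (hs : s.Finite) (Q : α → Prop) [DecidablePred Q]
    (h : ∀ a, Q a → a ∈ s) : Nat.card {a // Q a} = (hs.toFinset.filter Q).card := by
  have heq : {a | Q a} = ↑(hs.toFinset.filter Q) := by
    ext a
    simp only [Finset.coe_filter, Set.Finite.mem_toFinset, Set.mem_setOf_eq]
    exact ⟨fun hq => ⟨h a hq, hq⟩, fun h => h.2⟩
  rw [show {a // Q a} = ↥{a | Q a} from rfl, Nat.card_coe_set_eq, heq,
    Set.ncard_coe_finset]

end Aux

/-- The integral-geometric sandwich: for a closed set `Γ` with finitely many bounded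
components and `0 < r < R`,
`(1/Vol B(r)) ∫_{B(0,R−r)} N(Γ,H;r,u) du ≤ N(Γ,H;R)
  ≤ (1/Vol B(r)) ∫_{B(0,R+r)} N*(Γ,H;r,u) du`. -/
theorem integral_geometric_sandwich (n : ℕ) (Γ : Set (EuclideanSpace ℝ (Fin n)))
    (hclosed : IsClosed Γ) (hfin : {γ : Set (EuclideanSpace ℝ (Fin n)) | IsCompOf Γ γ}.Finite)
    (hbd : ∀ γ, IsCompOf Γ γ → Bornology.IsBounded γ)
    (H : Set (Set (EuclideanSpace ℝ (Fin n)))) (r R : ℝ) (hr : 0 < r) (hrR : r < R) :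
    (∫ u in ball (0 : EuclideanSpace ℝ (Fin n)) (R - r), (NIn n Γ H r u : ℝ)) /
        (volume (ball (0 : EuclideanSpace ℝ (Fin n)) r)).toReal
      ≤ (NClosed n Γ H R : ℝ) ∧
    (NClosed n Γ H R : ℝ)
      ≤ (∫ u in ball (0 : EuclideanSpace ℝ (Fin n)) (R + r), (NStar n Γ H r u : ℝ)) /
          (volume (ball (0 : EuclideanSpace ℝ (Fin n)) r)).toReal := by
  classical
  set T : Finset (Set (EuclideanSpace ℝ (Fin n))) := hfin.toFinset.filter (fun γ => γ ∈ H) with hT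
  have hmemT : ∀ γ, γ ∈ T ↔ IsCompOf Γ γ ∧ γ ∈ H := by
    intro γ
    simp [hT, Set.Finite.mem_toFinset]
  -- compactness of components in T
  have hcomp : ∀ γ ∈ T, IsCompact γ := fun γ hγ => by
    have h := ((hmemT γ).1 hγ).1
    exact Metric.isCompact_of_isClosed_isBounded (isCompOf_isClosed hclosed h) (hbd γ h)
  -- the key sets
  set A : Set (EuclideanSpace ℝ (Fin n)) → Set (EuclideanSpace ℝ (Fin n)) := fun γ => {u | γ ⊆ ball u r} with hA
  set B : Set (EuclideanSpace ℝ (Fin n)) → Set (EuclideanSpace ℝ (Fin n)) := fun γ => {u | (γ ∩ closedBall u r).Nonempty} with hB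
  have hAmeas : ∀ γ ∈ T, MeasurableSet (A γ) :=
    fun γ hγ => (isOpen_subset_ball (hcomp γ hγ) r).measurableSet
  have hBmeas : ∀ γ ∈ T, MeasurableSet (B γ) :=
    fun γ hγ => (isClosed_star (hcomp γ hγ) r).measurableSet
  -- counting identities
  have hNClosed : (NClosed n Γ H R : ℕ)
      = (T.filter (fun γ => γ ⊆ closedBall (0 : EuclideanSpace ℝ (Fin n)) R)).card := by
    rw [NClosed, card_filter hfin _ (fun γ h => h.1)]
    congr 1
    ext γ
    simp only [Finset.mem_filter, Set.Finite.mem_toFinset, Set.mem_setOf_eq, hmemT]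
    tauto
  have hNIn : ∀ u : EuclideanSpace ℝ (Fin n), (NIn n Γ H r u : ℕ)
      = (T.filter (fun γ => u ∈ A γ)).card := by
    intro u
    rw [NIn, card_filter hfin _ (fun γ h => h.1)]
    congr 1
    ext γ
    simp only [Finset.mem_filter, Set.Finite.mem_toFinset, Set.mem_setOf_eq, hmemT, hA]
    tauto
  have hNStar : ∀ u : EuclideanSpace ℝ (Fin n), (NStar n Γ H r u : ℕ)
      = (T.filter (fun γ => u ∈ B γ)).card := by
    intro u
    rw [NStar, card_filter hfin _ (fun γ h => h.1)]
    congr 1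
    ext γ
    simp only [Finset.mem_filter, Set.Finite.mem_toFinset, Set.mem_setOf_eq, hmemT, hB]
    tauto
  -- pointwise sum formulas
  have hNInSum : ∀ u : EuclideanSpace ℝ (Fin n), (NIn n Γ H r u : ℝ)
      = ∑ γ ∈ T, (A γ).indicator (fun _ => (1 : ℝ)) u := by
    intro u
    rw [hNIn u]
    rw [Finset.sum_congr rfl (fun γ _ => Set.indicator_apply (A γ) _ u)]
    rw [Finset.sum_boole]
  have hNStarSum : ∀ u : EuclideanSpace ℝ (Fin n), (NStar n Γ H r u : ℝ)
      = ∑ γ ∈ T, (B γ).indicator (fun _ => (1 : ℝ)) u := by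
    intro u
    rw [hNStar u]
    rw [Finset.sum_congr rfl (fun γ _ => Set.indicator_apply (B γ) _ u)]
    rw [Finset.sum_boole]
  -- basic volume facts
  set c : ℝ := (volume (ball (0 : EuclideanSpace ℝ (Fin n)) r)).toReal with hc
  have hc0 : 0 < c := ENNReal.toReal_pos (measure_ball_pos volume 0 hr).ne'
    measure_ball_lt_top.ne
  -- integrability of indicators
  have hint : ∀ (s : ℝ) (γ : Set (EuclideanSpace ℝ (Fin n))), MeasurableSet (A γ) →
      IntegrableOn ((A γ).indicator (fun _ => (1 : ℝ))) (ball (0 : EuclideanSpace ℝ (Fin n)) s) volume := by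
    intro s γ hm
    exact (integrableOn_const measure_ball_lt_top.ne).indicator hm
  have hintB : ∀ (s : ℝ) (γ : Set (EuclideanSpace ℝ (Fin n))), MeasurableSet (B γ) →
      IntegrableOn ((B γ).indicator (fun _ => (1 : ℝ))) (ball (0 : EuclideanSpace ℝ (Fin n)) s) volume := by
    intro s γ hm
    exact (integrableOn_const measure_ball_lt_top.ne).indicator hm
  -- integral of a single indicator
  have hind : ∀ (s : ℝ) (S : Set (EuclideanSpace ℝ (Fin n))), MeasurableSet S →
      ∫ u in ball (0 : EuclideanSpace ℝ (Fin n)) s, S.indicator (fun _ => (1 : ℝ)) u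
        = (volume (ball (0 : EuclideanSpace ℝ (Fin n)) s ∩ S)).toReal := by
    intro s S hm
    rw [setIntegral_indicator hm, setIntegral_const, smul_eq_mul, mul_one, measureReal_def]
  constructor
  · -- lower bound
    rw [div_le_iff₀ hc0]
    have h1 : (∫ u in ball (0 : EuclideanSpace ℝ (Fin n)) (R - r), (NIn n Γ H r u : ℝ))
        = ∑ γ ∈ T, (volume (ball (0 : EuclideanSpace ℝ (Fin n)) (R - r) ∩ A γ)).toReal := by
      rw [show (fun u => (NIn n Γ H r u : ℝ))
          = fun u => ∑ γ ∈ T, (A γ).indicator (fun _ => (1 : ℝ)) u from funext hNInSum]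
      rw [integral_finset_sum _ (fun γ hγ => hint (R - r) γ (hAmeas γ hγ))]
      exact Finset.sum_congr rfl fun γ hγ => hind (R - r) (A γ) (hAmeas γ hγ)
    rw [h1]
    have hle : ∀ γ ∈ T, (volume (ball (0 : EuclideanSpace ℝ (Fin n)) (R - r) ∩ A γ)).toReal
        ≤ if γ ⊆ closedBall (0 : EuclideanSpace ℝ (Fin n)) R then c else 0 := by
      intro γ hγ
      by_cases hsub : γ ⊆ closedBall (0 : EuclideanSpace ℝ (Fin n)) R
      · rw [if_pos hsub]
        obtain ⟨v, hv⟩ := isCompOf_nonempty ((hmemT γ).1 hγ).1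
        have hAs : A γ ⊆ ball v r := by
          intro u hu
          have : v ∈ ball u r := hu hv
          rwa [mem_ball, dist_comm, ← mem_ball] at this
        have : volume (ball (0 : EuclideanSpace ℝ (Fin n)) (R - r) ∩ A γ) ≤ volume (ball v r) :=
          measure_mono (le_trans Set.inter_subset_right hAs)
        calc (volume (ball (0 : EuclideanSpace ℝ (Fin n)) (R - r) ∩ A γ)).toReal
            ≤ (volume (ball v r)).toReal :=
              ENNReal.toReal_mono measure_ball_lt_top.ne this
          _ = c := by rw [hc, Measure.addHaar_ball_center]
      · rw [if_neg hsub]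
        have hempty : ball (0 : EuclideanSpace ℝ (Fin n)) (R - r) ∩ A γ = ∅ := by
          by_contra hne
          obtain ⟨u, hu1, hu2⟩ := Set.nonempty_iff_ne_empty.2 hne
          apply hsub
          intro x hx
          have h1 : dist x u < r := hu2 hx
          have h2 : dist u 0 < R - r := hu1
          have : dist x 0 ≤ dist x u + dist u 0 := dist_triangle x u 0
          rw [mem_closedBall]
          linarith
        rw [hempty]
        simp
    calc ∑ γ ∈ T, (volume (ball (0 : EuclideanSpace ℝ (Fin n)) (R - r) ∩ A γ)).toReal
        ≤ ∑ γ ∈ T, (if γ ⊆ closedBall (0 : EuclideanSpace ℝ (Fin n)) R then c else 0) := Finset.sum_le_sum hle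
      _ = (T.filter (fun γ => γ ⊆ closedBall (0 : EuclideanSpace ℝ (Fin n)) R)).card * c := by
          rw [← Finset.sum_filter, Finset.sum_const, nsmul_eq_mul]
      _ = (NClosed n Γ H R : ℝ) * c := by rw [hNClosed]
  · -- upper bound
    rw [le_div_iff₀ hc0]
    have h1 : (∫ u in ball (0 : EuclideanSpace ℝ (Fin n)) (R + r), (NStar n Γ H r u : ℝ))
        = ∑ γ ∈ T, (volume (ball (0 : EuclideanSpace ℝ (Fin n)) (R + r) ∩ B γ)).toReal := by
      rw [show (fun u => (NStar n Γ H r u : ℝ))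
          = fun u => ∑ γ ∈ T, (B γ).indicator (fun _ => (1 : ℝ)) u from funext hNStarSum]
      rw [integral_finset_sum _ (fun γ hγ => hintB (R + r) γ (hBmeas γ hγ))]
      exact Finset.sum_congr rfl fun γ hγ => hind (R + r) (B γ) (hBmeas γ hγ)
    rw [h1]
    have hge : ∀ γ ∈ T, (if γ ⊆ closedBall (0 : EuclideanSpace ℝ (Fin n)) R then c else 0)
        ≤ (volume (ball (0 : EuclideanSpace ℝ (Fin n)) (R + r) ∩ B γ)).toReal := by
      intro γ hγ
      by_cases hsub : γ ⊆ closedBall (0 : EuclideanSpace ℝ (Fin n)) R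
      · rw [if_pos hsub]
        obtain ⟨v, hv⟩ := isCompOf_nonempty ((hmemT γ).1 hγ).1
        have hbs : ball v r ⊆ ball (0 : EuclideanSpace ℝ (Fin n)) (R + r) ∩ B γ := by
          intro u hu
          constructor
          · have h1 : dist v 0 ≤ R := hsub hv
            have h2 : dist u v < r := hu
            have := dist_triangle u v (0 : EuclideanSpace ℝ (Fin n))
            rw [mem_ball]
            linarith
          · exact ⟨v, hv, by rw [mem_closedBall, dist_comm]; exact le_of_lt hu⟩
        have hμ : volume (ball v r) ≤ volume (ball (0 : EuclideanSpace ℝ (Fin n)) (R + r) ∩ B γ) :=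
          measure_mono hbs
        have hfin2 : volume (ball (0 : EuclideanSpace ℝ (Fin n)) (R + r) ∩ B γ) ≠ ⊤ :=
          (lt_of_le_of_lt (measure_mono Set.inter_subset_left) measure_ball_lt_top).ne
        calc c = (volume (ball v r)).toReal := by rw [hc, Measure.addHaar_ball_center volume v]
          _ ≤ _ := ENNReal.toReal_mono hfin2 hμ
      · rw [if_neg hsub]
        exact ENNReal.toReal_nonneg
    calc (NClosed n Γ H R : ℝ) * c
        = (T.filter (fun γ => γ ⊆ closedBall (0 : EuclideanSpace ℝ (Fin n)) R)).card * c := by rw [hNClosed]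
      _ = ∑ γ ∈ T, (if γ ⊆ closedBall (0 : EuclideanSpace ℝ (Fin n)) R then c else 0) := by
          rw [← Finset.sum_filter, Finset.sum_const, nsmul_eq_mul]
      _ ≤ _ := Finset.sum_le_sum hge
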